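/- arXiv:2301.00890 — 3 statements merged into one kernel-verified Lean document; each statement's English description precedes it below -/
import Mathlib

section
/- Let μ be a probability measure supported on M ⊆ ⋃_{k=1}^K S_k, and {ρ_k} functions ρ_k : ℝ^D → [0,1] supported in S_k with Σ_k ρ_k = 1 on M. Set p_k = ∫ ρ_k dμ and, for those k with p_k > 0, let ν_k = (φ_k)_# (ρ_k μ / p_k) where φ_k is injective and bimeasurable on S_k. Then μ = Σ_{k : p_k > 0} p_k · (φ_k^{-1})_# ν_k, i.e. μ is a mixture of generative models with mixture weights p_k summing to 1. -/
open MeasureTheory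
open scoped Classical

set_option maxHeartbeats 1000000 in
set_option maxHeartbeats 1000000 in
lemma withDensity_finsetSum {α ι : Type*} {m : MeasurableSpace α} (μ : MeasureTheory.Measure α)
    (s : Finset ι) (f : ι → α → ENNReal) (hf : ∀ i, Measurable (f i)) :
    μ.withDensity (fun x => ∑ i ∈ s, f i x) = ∑ i ∈ s, μ.withDensity (f i) := by
  induction s using Finset.induction_on with
  | empty => simp
  | insert _ _ h ih =>
    rw [Finset.sum_insert h, ← ih]
    simp only [Finset.sum_insert h]
    exact withDensity_add_left (hf _) _

set_option maxHeartbeats 1000000 in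
/-- A probability measure supported on `M ⊆ ⋃ k S k` is a mixture of the
generative models `(φ k⁻¹)_# ν_k` with weights `p k = ∫ ρ k dμ`, the weights summing to one. -/
theorem mixture_of_generative_models
    {D d K : ℕ}
    (M : Set (EuclideanSpace ℝ (Fin D)))
    (S : Fin K → Set (EuclideanSpace ℝ (Fin D)))
    (hMcov : M ⊆ ⋃ k, S k)
    (ρ : Fin K → EuclideanSpace ℝ (Fin D) → ℝ)
    (hρmeas : ∀ k, Measurable (ρ k))
    (hρ01 : ∀ k x, ρ k x ∈ Set.Icc (0 : ℝ) 1)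
    (hρsupp : ∀ k, Function.support (ρ k) ⊆ S k)
    (hρsum : ∀ x ∈ M, ∑ k, ρ k x = 1)
    (μ : Measure (EuclideanSpace ℝ (Fin D))) [IsProbabilityMeasure μ]
    (hμM : μ Mᶜ = 0)
    (φ : Fin K → EuclideanSpace ℝ (Fin D) → EuclideanSpace ℝ (Fin d))
    (ψ : Fin K → EuclideanSpace ℝ (Fin d) → EuclideanSpace ℝ (Fin D))
    (hφmeas : ∀ k, Measurable (φ k))
    (hψmeas : ∀ k, Measurable (ψ k))
    (hφinj : ∀ k, Set.InjOn (φ k) (S k))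
    (hψφ : ∀ k, ∀ x ∈ S k, ψ k (φ k x) = x)
    (p : Fin K → ℝ) (hp : ∀ k, p k = ∫ x, ρ k x ∂μ)
    (ν : Fin K → Measure (EuclideanSpace ℝ (Fin d)))
    (hν : ∀ k, 0 < p k →
      ν k = Measure.map (φ k)
        ((ENNReal.ofReal (p k))⁻¹ • μ.withDensity fun x => ENNReal.ofReal (ρ k x))) :
    (μ = ∑ k ∈ Finset.univ.filter fun k => 0 < p k,
        ENNReal.ofReal (p k) • Measure.map (ψ k) (ν k)) ∧
    ∑ k, p k = 1 := by
  have hint : ∀ k, Integrable (ρ k) μ := by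
    intro k
    refine (integrable_const (1 : ℝ)).mono' (hρmeas k).aestronglyMeasurable
      (Filter.Eventually.of_forall fun x => ?_)
    rw [Real.norm_eq_abs, abs_of_nonneg (hρ01 k x).1]
    exact (hρ01 k x).2
  have hμae : ∀ᵐ x ∂μ, x ∈ M := by
    rw [ae_iff]
    exact hμM
  have hsum1 : ∑ k, p k = 1 := by
    have : ∑ k, p k = ∫ x, ∑ k, ρ k x ∂μ := by
      rw [integral_finset_sum _ fun k _ => hint k]
      simp only [hp]
    rw [this]
    have : ∫ x, ∑ k, ρ k x ∂μ = ∫ _x, (1 : ℝ) ∂μ := by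
      refine integral_congr_ae ?_
      filter_upwards [hμae] with x hx using hρsum x hx
    rw [this, integral_const]
    simp
  refine ⟨?_, hsum1⟩
  set f : Fin K → EuclideanSpace ℝ (Fin D) → ENNReal :=
    fun k x => ENNReal.ofReal (ρ k x) with hf
  have hfmeas : ∀ k, Measurable (f k) := fun k => (hρmeas k).ennreal_ofReal
  -- μ equals the sum of the withDensity pieces
  have hμeq : μ = ∑ k, μ.withDensity (f k) := by
    rw [← withDensity_finsetSum μ Finset.univ f hfmeas]
    have : μ.withDensity (fun x => ∑ k, f k x) = μ.withDensity 1 := by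
      refine withDensity_congr_ae ?_
      filter_upwards [hμae] with x hx
      simp only [Pi.one_apply, hf]
      rw [← ENNReal.ofReal_sum_of_nonneg fun k _ => (hρ01 k x).1, hρsum x hx,
        ENNReal.ofReal_one]
    rw [this, withDensity_one]
  -- pieces with p k = 0 vanish
  have hzero : ∀ k, ¬ 0 < p k → μ.withDensity (f k) = 0 := by
    intro k hk
    have hpk : p k = 0 := le_antisymm (not_lt.1 hk)
      (by rw [hp k]; exact integral_nonneg fun x => (hρ01 k x).1)
    have hρ0 : ρ k =ᵐ[μ] 0 := by
      rw [← integral_eq_zero_iff_of_nonneg (fun x => (hρ01 k x).1) (hint k), ← hp k]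
      exact hpk
    have : f k =ᵐ[μ] 0 := by
      filter_upwards [hρ0] with x hx
      simp [hf, hx]
    rw [withDensity_congr_ae this]
    simp
  -- pieces with p k > 0 are recovered from ν k
  have hpos : ∀ k, 0 < p k →
      ENNReal.ofReal (p k) • Measure.map (ψ k) (ν k) = μ.withDensity (f k) := by
    intro k hk
    rw [hν k hk, Measure.map_smul, Measure.map_smul,
      Measure.map_map (hψmeas k) (hφmeas k)]
    have hmap : Measure.map (ψ k ∘ φ k) (μ.withDensity (f k)) = μ.withDensity (f k) := by
      have hae : (ψ k ∘ φ k) =ᵐ[μ.withDensity (f k)] id := by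
        rw [Filter.EventuallyEq, ae_iff]
        have hAmeas : MeasurableSet {x | ¬ (ψ k ∘ φ k) x = id x} :=
          (measurableSet_eq_fun ((hψmeas k).comp (hφmeas k)) measurable_id).compl
        rw [withDensity_apply _ hAmeas]
        have : ∀ x ∈ {x | ¬ (ψ k ∘ φ k) x = id x}, f k x = 0 := by
          intro x hx
          by_contra h
          have hxS : x ∈ S k := hρsupp k (by
            intro h0
            exact h (by simp [hf, h0]))
          exact hx (hψφ k x hxS)
        calc ∫⁻ x in {x | ¬ (ψ k ∘ φ k) x = id x}, f k x ∂μ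
            = ∫⁻ x in {x | ¬ (ψ k ∘ φ k) x = id x}, 0 ∂μ :=
              setLIntegral_congr_fun hAmeas this
          _ = 0 := by simp
      rw [Measure.map_congr hae, Measure.map_id]
    rw [hmap, smul_smul, ENNReal.mul_inv_cancel (by positivity) ENNReal.ofReal_ne_top,
      one_smul]
  rw [Finset.sum_congr rfl fun k hk => hpos k (Finset.mem_filter.1 hk).2]
  rw [Finset.sum_filter_of_ne fun k _ hk => by
    by_contra h
    exact hk (hzero k h)]
  exact hμeq
end

section
/- Let G : B_{r_0}^d → ℝ^D be continuously differentiable with G(0) = x_0, and suppose sup_{v ∈ S^{d-1}} sup_{z,z' ∈ B_{r_0}^d} ‖(J_G(z) − J_G(z')) v‖ / ‖J_G(0) v‖ ≤ 1/3. Let z = a v with ‖v‖ = 1 and 0 < a ≤ r_0, and let 0 < r < a, z' = (a − r) v. Then ‖G(z') − G(0)‖ ≤ ((a − r/2)/a) · ‖G(z) − G(0)‖. -/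
open Metric RealInnerProductSpace

set_option maxHeartbeats 1000000

/-- Under a Jacobian-variation bound on the ball `B_{r₀}`, shrinking the
radial coordinate from `a` to `a - r` shrinks the distance to the center value `G 0 = x₀`
by at least the factor `(a - r/2)/a`. -/
theorem radial_contraction_of_jacobian_variation {d D : ℕ}
    (G : EuclideanSpace ℝ (Fin d) → EuclideanSpace ℝ (Fin D))
    (r₀ : ℝ) (hr₀ : 0 < r₀)
    (x₀ : EuclideanSpace ℝ (Fin D))
    (hG : ContDiff ℝ 1 G) (hG0 : G 0 = x₀)
    (hvar : ∀ v : EuclideanSpace ℝ (Fin d), ‖v‖ = 1 →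
      ∀ z ∈ closedBall (0 : EuclideanSpace ℝ (Fin d)) r₀,
      ∀ z' ∈ closedBall (0 : EuclideanSpace ℝ (Fin d)) r₀,
        ‖fderiv ℝ G z v - fderiv ℝ G z' v‖ ≤ (1 / 3) * ‖fderiv ℝ G 0 v‖)
    (v : EuclideanSpace ℝ (Fin d)) (hv : ‖v‖ = 1)
    (a r : ℝ) (ha0 : 0 < a) (har₀ : a ≤ r₀) (hr0 : 0 < r) (hra : r < a) :
    ‖G ((a - r) • v) - G 0‖ ≤ ((a - r / 2) / a) * ‖G (a • v) - G 0‖ := by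
  have hdG : Differentiable ℝ G := hG.differentiable one_ne_zero
  set w : EuclideanSpace ℝ (Fin D) := fderiv ℝ G 0 v with hw
  set c : ℝ := ‖w‖ with hc
  have hcnn : 0 ≤ c := norm_nonneg _
  have har : (0:ℝ) < a - r := by linarith
  -- derivative of the radial path
  have hpath : ∀ t : ℝ, HasDerivAt (fun s : ℝ => G (s • v)) (fderiv ℝ G (t • v) v) t := by
    intro t
    have h1 : HasDerivAt (fun s : ℝ => s • v) v t := by
      simpa using (hasDerivAt_id t).smul_const v
    exact (hdG (t • v)).hasFDerivAt.comp_hasDerivAt t h1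
  set φ : ℝ → EuclideanSpace ℝ (Fin D) := fun t => fderiv ℝ G (t • v) v with hφ
  have hmem : ∀ t ∈ Set.Icc (0:ℝ) a, t • v ∈ closedBall (0 : EuclideanSpace ℝ (Fin d)) r₀ := by
    intro t ht
    simp only [mem_closedBall, dist_zero_right, norm_smul, hv, mul_one, Real.norm_eq_abs]
    rw [abs_of_nonneg ht.1]
    exact ht.2.trans har₀
  have hvar' : ∀ t ∈ Set.Icc (0:ℝ) a, ∀ t' ∈ Set.Icc (0:ℝ) a, ‖φ t - φ t'‖ ≤ c / 3 := by
    intro t ht t' ht'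
    have h := hvar v hv (t • v) (hmem t ht) (t' • v) (hmem t' ht')
    calc ‖φ t - φ t'‖ ≤ (1/3) * c := h
      _ = c / 3 := by ring
  have hφ0 : φ 0 = w := by simp [hφ, hw]
  set A : ℝ := ‖G (a • v) - G 0‖ with hA
  have hAnn : 0 ≤ A := norm_nonneg _
  -- lower bound on A: 2 a c ≤ 3 A
  have hclow : 2 * (a * c) ≤ 3 * A := by
    have hder : ∀ t ∈ Set.Icc (0:ℝ) a,
        HasDerivWithinAt (fun s : ℝ => G (s • v) - s • w) (φ t - w) (Set.Icc 0 a) t := by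
      intro t _
      have h2 : HasDerivAt (fun s : ℝ => s • w) w t := by
        simpa using (hasDerivAt_id t).smul_const w
      exact ((hpath t).sub h2).hasDerivWithinAt
    have hbound : ∀ t ∈ Set.Ico (0:ℝ) a, ‖φ t - w‖ ≤ c / 3 := by
      intro t ht
      have := hvar' t ⟨ht.1, ht.2.le⟩ 0 ⟨le_rfl, ha0.le⟩
      rwa [hφ0] at this
    have hkey := norm_image_sub_le_of_norm_deriv_le_segment' hder hbound a
      (Set.right_mem_Icc.2 ha0.le)
    simp only [zero_smul, sub_zero, sub_sub_sub_cancel_right] at hkey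
    -- hkey : ‖G (a • v) - a • w - (G (0 • v) - 0 • w)‖ ≤ c / 3 * (a - 0)
    have hkey' : ‖G (a • v) - G 0 - a • w‖ ≤ c / 3 * a := by
      have e : G (a • v) - a • w - G 0 = G (a • v) - G 0 - a • w := by abel
      rwa [e] at hkey
    have h1 : ‖a • w‖ ≤ A + ‖G (a • v) - G 0 - a • w‖ := by
      calc ‖a • w‖ = ‖(G (a • v) - G 0) - (G (a • v) - G 0 - a • w)‖ := by congr 1; abel
        _ ≤ A + ‖G (a • v) - G 0 - a • w‖ := norm_sub_le _ _
    have h2 : ‖a • w‖ = a * c := by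
      rw [norm_smul, Real.norm_eq_abs, abs_of_nonneg ha0.le]
    linarith
  -- the dual direction
  set u : EuclideanSpace ℝ (Fin D) := G ((a - r) • v) - G 0 with hu
  set B : ℝ := ‖u‖ with hB
  have hBnn : 0 ≤ B := norm_nonneg _
  set l : EuclideanSpace ℝ (Fin D) := ‖u‖⁻¹ • u with hl
  have hlnorm : ‖l‖ ≤ 1 := by
    rcases eq_or_ne u 0 with h | h
    · simp [hl, h]
    · rw [hl, norm_smul, norm_inv, norm_norm, inv_mul_cancel₀ (norm_ne_zero_iff.2 h)]
  have hlu : ⟪l, u⟫ = B := by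
    rcases eq_or_ne u 0 with h | h
    · simp [hl, h, hB]
    · rw [hl, real_inner_smul_left, real_inner_self_eq_norm_sq, hB, sq, ← mul_assoc,
        inv_mul_cancel₀ (norm_ne_zero_iff.2 h), one_mul]
  set h : ℝ → ℝ := fun t => ⟪l, G (t • v)⟫ with hh_def
  set g : ℝ → ℝ := fun t => ⟪l, φ t⟫ with hg_def
  have hhd : Differentiable ℝ h := fun s => by
    have := (innerSL ℝ l).hasFDerivAt.comp_hasDerivAt s (hpath s)
    exact this.differentiableAt
  have hh : ∀ t : ℝ, HasDerivAt h (g t) t := by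
    intro t
    have := (innerSL ℝ l).hasFDerivAt.comp_hasDerivAt t (hpath t)
    exact this
  have hgvar : ∀ t ∈ Set.Icc (0:ℝ) a, ∀ t' ∈ Set.Icc (0:ℝ) a, g t' ≤ g t + c / 3 := by
    intro t ht t' ht'
    have h1 : g t' - g t = ⟪l, φ t' - φ t⟫ := by
      simp [hg_def, inner_sub_right]
    have h2 : ⟪l, φ t' - φ t⟫ ≤ ‖l‖ * ‖φ t' - φ t‖ := real_inner_le_norm _ _
    have h3 : ‖l‖ * ‖φ t' - φ t‖ ≤ 1 * (c / 3) :=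
      mul_le_mul hlnorm (hvar' t' ht' t ht) (norm_nonneg _) zero_le_one
    linarith
  have hB_eq : h (a - r) - h 0 = B := by
    rw [← hlu, hu, inner_sub_right, hh_def]
    simp
  -- pointwise lower bound on g over [a-r, a]
  have hslope : ∀ t ∈ Set.Icc (a - r) a, B ≤ (a - r) * (g t + c / 3) := by
    intro t ht
    have htIcc : t ∈ Set.Icc (0:ℝ) a := ⟨le_trans har.le ht.1, ht.2⟩
    set C : ℝ := g t + c / 3 with hC
    have hmono : MonotoneOn (fun s => C * s - h s) (Set.Icc (0:ℝ) (a - r)) := by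
      apply monotoneOn_of_deriv_nonneg (convex_Icc _ _)
      · exact ((continuous_const.mul continuous_id).sub hhd.continuous).continuousOn
      · exact fun s _ => ((differentiable_id.const_mul C).sub hhd).differentiableAt.differentiableWithinAt
      · intro s hs
        rw [interior_Icc] at hs
        have hD : HasDerivAt (fun s => C * s - h s) (C - g s) s := by
          have e := ((hasDerivAt_id s).const_mul C).sub (hh s)
          rw [mul_one] at e
          exact e
        rw [hD.deriv]
        have : g s ≤ g t + c / 3 := hgvar t htIcc s ⟨hs.1.le, hs.2.le.trans (by linarith)⟩
        simp [hC]; linarith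
      done
    have := hmono (Set.left_mem_Icc.2 har.le) (Set.right_mem_Icc.2 har.le) har.le
    simp only [mul_zero, zero_sub] at this
    -- this : -h 0 ≤ C * (a - r) - h (a - r)
    have : h (a - r) - h 0 ≤ C * (a - r) := by linarith
    rw [hB_eq] at this
    linarith [this]
  -- lower bound on the tail increment
  have hm : (0:ℝ) < a - r := har
  set m : ℝ := B / (a - r) - c / 3 with hm_def
  have hglow : ∀ t ∈ Set.Icc (a - r) a, m ≤ g t := by
    intro t ht
    have := hslope t ht
    rw [hm_def, sub_le_iff_le_add, div_le_iff₀ har]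
    calc B ≤ (a - r) * (g t + c / 3) := this
      _ = (g t + c / 3) * (a - r) := by ring
  have htail : m * r ≤ h a - h (a - r) := by
    have hmono : MonotoneOn (fun s => h s - m * s) (Set.Icc (a - r) a) := by
      apply monotoneOn_of_deriv_nonneg (convex_Icc _ _)
      · exact (hhd.continuous.sub (continuous_const.mul continuous_id)).continuousOn
      · exact fun s _ => (hhd.sub (differentiable_id.const_mul m)).differentiableAt.differentiableWithinAt
      · intro s hs
        rw [interior_Icc] at hs
        have hD : HasDerivAt (fun s => h s - m * s) (g s - m) s := by
          have e := (hh s).sub ((hasDerivAt_id s).const_mul m)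
          rw [mul_one] at e
          exact e
        rw [hD.deriv]
        have := hglow s ⟨hs.1.le, hs.2.le⟩
        linarith
    have h2 := hmono (Set.left_mem_Icc.2 (by linarith : a - r ≤ a))
      (Set.right_mem_Icc.2 (by linarith : a - r ≤ a)) (by linarith : a - r ≤ a)
    simp only [] at h2
    have e : m * a - m * (a - r) = m * r := by ring
    linarith
  -- upper bound: h a - h 0 ≤ A
  have hAbound : h a - h 0 ≤ A := by
    have h1 : h a - h 0 = ⟪l, G (a • v) - G 0⟫ := by
      rw [hh_def, inner_sub_right]
      simp
    have h2 : ⟪l, G (a • v) - G 0⟫ ≤ ‖l‖ * ‖G (a • v) - G 0‖ := real_inner_le_norm _ _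
    have h3 : ‖l‖ * ‖G (a • v) - G 0‖ ≤ 1 * A :=
      mul_le_mul hlnorm le_rfl (norm_nonneg _) zero_le_one
    linarith
  -- combine: B + r * m ≤ A
  have hkey : B + r * m ≤ A := by
    linarith [htail, hB_eq, hAbound]
  -- final algebra
  have hmrel : m * (a - r) = B - c / 3 * (a - r) := by
    rw [hm_def]
    field_simp
  rw [div_mul_eq_mul_div, le_div_iff₀ ha0]
  have t1 : (B + r * m) * (a - r) ≤ A * (a - r) :=
    mul_le_mul_of_nonneg_right hkey har.le
  have t2 : r * (m * (a - r)) = r * (B - c / 3 * (a - r)) := by rw [hmrel]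
  have t3 : r * (2 * (a * c)) ≤ r * (3 * A) :=
    mul_le_mul_of_nonneg_left hclow hr0.le
  have t4 : 0 ≤ c * r * r := mul_nonneg (mul_nonneg hcnn hr0.le) hr0.le
  clear_value m B A c
  nlinarith [t1, t2, t3, t4]
end

section
/- Let μ be a probability measure on a compact set M ⊂ ℝ^D. Suppose there exist τ > 0, c > 0 such that for every x_0 ∈ M and every 0 < ε ≤ τ, μ(B_ε(x_0)) ≥ c ε^d. Let X_1, …, X_n be i.i.d. samples from μ. Then there exist constants C, c_1 (depending on c, d, τ and the covering numbers of M) such that with probability at least 1 − n^{-1}, every point x ∈ M lies within distance c_1 (log n / n)^{1/d} of some sample X_i, i.e. M ⊆ ⋃_{i=1}^n B_{c_1 (log n / n)^{1/d}}(X_i), provided n ≥ C. -/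
open MeasureTheory Metric

/-- A maximal `ε`-separated subset of `M` is an `ε`-net whose cardinality is controlled by the
lower measure bound (packing argument). -/
lemma exists_net_of_measure_lower_bound {D : ℕ} (d : ℕ)
    (M : Set (EuclideanSpace ℝ (Fin D)))
    (μ : Measure (EuclideanSpace ℝ (Fin D))) [IsProbabilityMeasure μ]
    (τ c : ℝ) (hτ : 0 < τ) (hc : 0 < c)
    (hlow : ∀ x₀ ∈ M, ∀ ε : ℝ, 0 < ε → ε ≤ τ →
      ENNReal.ofReal (c * ε ^ d) ≤ μ (closedBall x₀ ε))
    (ε : ℝ) (hε : 0 < ε) (hετ : ε ≤ τ) :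
    ∃ S : Finset (EuclideanSpace ℝ (Fin D)), ↑S ⊆ M ∧
      (∀ x ∈ M, ∃ y ∈ S, dist x y ≤ ε) ∧
      (S.card : ℝ) * (c * (ε / 2) ^ d) ≤ 1 := by
  classical
  set q : ℝ := c * (ε / 2) ^ d with hq
  have hq0 : 0 < q := by positivity
  set P : Finset (EuclideanSpace ℝ (Fin D)) → Prop := fun S =>
    ↑S ⊆ M ∧ (↑S : Set (EuclideanSpace ℝ (Fin D))).Pairwise (fun y y' => ε < dist y y') with hP
  -- cardinality bound for separated sets
  have hcard : ∀ S, P S → (S.card : ℝ) * q ≤ 1 := by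
    intro S ⟨hSM, hsep⟩
    have hdisj : (↑S : Set (EuclideanSpace ℝ (Fin D))).PairwiseDisjoint
        (fun y => closedBall y (ε / 2)) := by
      intro y hy y' hy' hne
      exact closedBall_disjoint_closedBall (by
        have := hsep hy hy' hne; linarith)
    have hmeas := measure_biUnion_finset (μ := μ) hdisj (fun y _ => measurableSet_closedBall)
    have hsum : (S.card : ℕ) • ENNReal.ofReal q ≤ 1 := by
      calc (S.card : ℕ) • ENNReal.ofReal q
          = ∑ _y ∈ S, ENNReal.ofReal q := by rw [Finset.sum_const]
        _ ≤ ∑ y ∈ S, μ (closedBall y (ε / 2)) := by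
            refine Finset.sum_le_sum fun y hy => ?_
            exact hlow y (hSM hy) (ε / 2) (by linarith) (by linarith)
        _ = μ (⋃ y ∈ S, closedBall y (ε / 2)) := hmeas.symm
        _ ≤ 1 := prob_le_one
    have : ENNReal.ofReal ((S.card : ℝ) * q) ≤ 1 := by
      rw [ENNReal.ofReal_mul (by positivity)]
      simpa [nsmul_eq_mul, ENNReal.ofReal_natCast] using hsum
    exact ENNReal.ofReal_le_one.mp this
  -- set of achievable cardinalities
  set A : Set ℕ := {k | ∃ S, P S ∧ S.card = k} with hA
  have hA0 : (0 : ℕ) ∈ A := ⟨∅, ⟨by simp, by simp⟩, rfl⟩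
  have hAbdd : BddAbove A := by
    refine ⟨Nat.ceil (1 / q), ?_⟩
    rintro k ⟨S, hS, rfl⟩
    have h1 := hcard S hS
    have h2 : (S.card : ℝ) ≤ 1 / q := by
      rw [le_div_iff₀ hq0]; exact h1
    exact_mod_cast h2.trans (Nat.le_ceil (1 / q))
  obtain ⟨S, hS, hSk⟩ := Nat.sSup_mem ⟨0, hA0⟩ hAbdd
  refine ⟨S, hS.1, ?_, hSk ▸ hcard S hS⟩
  intro x hx
  by_contra hcon
  push_neg at hcon
  have hxS : x ∉ S := fun hxS => by
    have := hcon x hxS; simp at this; linarith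
  have hins : P (insert x S) := by
    constructor
    · intro z hz
      rcases Finset.mem_insert.mp hz with rfl | hz
      · exact hx
      · exact hS.1 hz
    · rw [Finset.coe_insert]
      refine Set.Pairwise.insert hS.2 ?_
      intro y hy hne
      have := hcon y hy
      constructor
      · exact this
      · rwa [dist_comm]
  have : S.card + 1 ∈ A := ⟨insert x S, hins, by rw [Finset.card_insert_of_notMem hxS]⟩
  have := le_csSup hAbdd this
  omega

/-- Probability that all `n` i.i.d. samples miss a set of measure at least `p`. -/
lemma prob_all_miss {E : Type*} [MeasurableSpace E] (μ : Measure E) [IsProbabilityMeasure μ]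
    (n : ℕ) (B : Set E) (hB : MeasurableSet B) (p : ℝ) (hp0 : 0 ≤ p)
    (hp : ENNReal.ofReal p ≤ μ B) :
    (Measure.pi fun _ : Fin n => μ) {X | ∀ i, X i ∉ B} ≤ ENNReal.ofReal ((1 - p) ^ n) := by
  have hp1 : p ≤ 1 := ENNReal.ofReal_le_one.mp (hp.trans prob_le_one)
  have hset : {X : Fin n → E | ∀ i, X i ∉ B} = Set.pi Set.univ (fun _ => Bᶜ) := by
    ext X; simp [Set.mem_pi]
  rw [hset, Measure.pi_pi]
  have hcompl : μ Bᶜ ≤ ENNReal.ofReal (1 - p) := by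
    rw [prob_compl_eq_one_sub hB]
    calc 1 - μ B ≤ 1 - ENNReal.ofReal p := tsub_le_tsub_left hp 1
      _ = ENNReal.ofReal 1 - ENNReal.ofReal p := by rw [ENNReal.ofReal_one]
      _ = ENNReal.ofReal (1 - p) := (ENNReal.ofReal_sub 1 hp0).symm
  calc ∏ _i : Fin n, μ Bᶜ = (μ Bᶜ) ^ n := by simp
    _ ≤ (ENNReal.ofReal (1 - p)) ^ n := pow_le_pow_left' hcompl n
    _ = ENNReal.ofReal ((1 - p) ^ n) := by rw [ENNReal.ofReal_pow (by linarith)]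

set_option maxHeartbeats 2000000 in
/-- If a probability measure on a compact set `M ⊂ ℝ^D` satisfies the
`d`-dimensional lower measure bound `μ(B_ε(x₀)) ≥ c ε^d`, then with probability at least
`1 - 1/n`, the i.i.d. sample `X_1, …, X_n` forms a `c₁ (log n / n)^{1/d}`-net of `M`. -/
theorem sample_covering_of_support {D : ℕ} (d : ℕ) (hd : 1 ≤ d)
    (M : Set (EuclideanSpace ℝ (Fin D))) (hMc : IsCompact M)
    (μ : Measure (EuclideanSpace ℝ (Fin D))) [IsProbabilityMeasure μ]
    (hμM : μ Mᶜ = 0)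
    (τ c : ℝ) (hτ : 0 < τ) (hc : 0 < c)
    (hlow : ∀ x₀ ∈ M, ∀ ε : ℝ, 0 < ε → ε ≤ τ →
      ENNReal.ofReal (c * ε ^ d) ≤ μ (closedBall x₀ ε)) :
    ∃ C c₁ : ℝ, 0 < C ∧ 0 < c₁ ∧ ∀ n : ℕ, C ≤ (n : ℝ) →
      ENNReal.ofReal (1 - 1 / (n : ℝ)) ≤
        (Measure.pi fun _ : Fin n => μ)
          {X | M ⊆ ⋃ i, closedBall (X i) (c₁ * (Real.log n / n) ^ ((1 : ℝ) / d))} := by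
  classical
  have hMne : M.Nonempty := by
    by_contra h
    rw [Set.not_nonempty_iff_eq_empty] at h
    rw [h, Set.compl_empty, measure_univ] at hμM
    exact one_ne_zero hμM
  obtain ⟨x₀, hx₀⟩ := hMne
  have hτd : (0:ℝ) < τ ^ d := pow_pos hτ d
  have hd0 : (d:ℝ) ≠ 0 := Nat.cast_ne_zero.mpr (by omega)
  -- choose the threshold C
  have hlog : Filter.Tendsto (fun x : ℝ => Real.log x / x) Filter.atTop (nhds 0) :=
    Real.isLittleO_log_id_atTop.tendsto_div_nhds_zero
  have h1 : ∀ᶠ x : ℝ in Filter.atTop, 3 * Real.log x / (c * x) ≤ τ ^ d := by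
    have h2 : Filter.Tendsto (fun x : ℝ => 3 / c * (Real.log x / x)) Filter.atTop (nhds 0) := by
      simpa using hlog.const_mul (3 / c)
    filter_upwards [h2.eventually_lt_const hτd] with x hx
    calc 3 * Real.log x / (c * x) = 3 / c * (Real.log x / x) := by rw [div_mul_div_comm]
      _ ≤ τ ^ d := le_of_lt hx
  obtain ⟨C₀, hC₀⟩ := Filter.eventually_atTop.mp
    (h1.and ((Filter.eventually_ge_atTop (3:ℝ)).and (Filter.eventually_ge_atTop ((2:ℝ) ^ d))))
  refine ⟨max C₀ 1, 2 * (3 / c) ^ ((1:ℝ) / d), lt_max_of_lt_right one_pos, by positivity, ?_⟩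
  intro n hn
  obtain ⟨hτn, hn3, hn2d⟩ := hC₀ n (le_trans (le_max_left _ _) hn)
  have hnpos : (0:ℝ) < n := by linarith
  have hL1 : 1 ≤ Real.log n := by
    rw [Real.le_log_iff_exp_le hnpos]
    calc Real.exp 1 ≤ 2.7182818286 := le_of_lt Real.exp_one_lt_d9
      _ ≤ 3 := by norm_num
      _ ≤ n := hn3
  set L := Real.log n with hLdef
  set b : ℝ := 3 * L / (c * n) with hb
  have hb0 : 0 < b := div_pos (by nlinarith) (by positivity)
  set ε : ℝ := b ^ ((1:ℝ) / d) with hεdef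
  have hε0 : 0 < ε := Real.rpow_pos_of_pos hb0 _
  have hεd : ε ^ d = b := by
    rw [hεdef, ← Real.rpow_natCast (b ^ ((1:ℝ) / d)) d, ← Real.rpow_mul hb0.le,
      one_div_mul_cancel hd0, Real.rpow_one]
  have hετ : ε ≤ τ := by
    calc ε ≤ (τ ^ d) ^ ((1:ℝ) / d) := Real.rpow_le_rpow hb0.le hτn (by positivity)
      _ = τ := by
        rw [← Real.rpow_natCast τ d, ← Real.rpow_mul hτ.le, mul_one_div_cancel hd0,
          Real.rpow_one]
  -- the net
  obtain ⟨S, hSM, hScov, hScard⟩ :=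
    exists_net_of_measure_lower_bound d M μ τ c hτ hc hlow ε hε0 hετ
  -- the radius in the statement is `2 * ε`
  have hrad : 2 * (3 / c) ^ ((1:ℝ) / d) * (L / n) ^ ((1:ℝ) / d) = 2 * ε := by
    rw [hεdef, hb, mul_assoc, ← Real.mul_rpow (by positivity) (by positivity),
      div_mul_div_comm]
  -- `p = c ε^d = 3 L / n`
  have hpval : c * ε ^ d = 3 * L / n := by
    rw [hεd, hb]; field_simp
  have hp1 : c * ε ^ d ≤ 1 :=
    ENNReal.ofReal_le_one.mp ((hlow x₀ hx₀ ε hε0 hετ).trans prob_le_one)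
  have hnn : (0:ℝ) ≤ 1 - c * ε ^ d := by linarith
  -- good event: every net ball is hit
  set G : Set (Fin n → EuclideanSpace ℝ (Fin D)) :=
    ⋂ y ∈ S, ⋃ i : Fin n, {X | X i ∈ closedBall y ε} with hG
  -- failure probability of one ball
  have hmiss : ∀ y ∈ S, (Measure.pi fun _ : Fin n => μ) {X | ∀ i, X i ∉ closedBall y ε}
      ≤ ENNReal.ofReal ((1 - c * ε ^ d) ^ n) := fun y hy =>
    prob_all_miss μ n _ measurableSet_closedBall _ (by positivity)
      (hlow y (hSM hy) ε hε0 hετ)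
  -- exponential bound
  have hexp : (1 - c * ε ^ d) ^ n ≤ 1 / (n:ℝ) ^ 3 := by
    have he1 : 1 - c * ε ^ d ≤ Real.exp (-(c * ε ^ d)) := by
      have := Real.add_one_le_exp (-(c * ε ^ d)); linarith
    calc (1 - c * ε ^ d) ^ n ≤ Real.exp (-(c * ε ^ d)) ^ n := pow_le_pow_left₀ hnn he1 n
      _ = Real.exp (-(3 * L)) := by
          rw [← Real.exp_nat_mul, hpval]
          congr 1
          field_simp
      _ = 1 / (n:ℝ) ^ 3 := by
          rw [Real.exp_neg, show (3:ℝ) * L = (3:ℕ) * L by norm_num, Real.exp_nat_mul,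
            Real.exp_log hnpos, one_div]
  -- complement of the good event
  have hGc : Gᶜ = ⋃ y ∈ S, {X : Fin n → EuclideanSpace ℝ (Fin D) | ∀ i, X i ∉ closedBall y ε} := by
    rw [hG]
    ext X
    simp only [Set.mem_compl_iff, Set.mem_iInter, Set.mem_iUnion, Set.mem_setOf_eq, exists_prop]
    push_neg
    rfl
  -- bound on the cardinality of the net
  have hcard' : (S.card : ℝ) ≤ n * 2 ^ d / (3 * L) := by
    rw [le_div_iff₀ (by nlinarith)]
    have hq : c * (ε / 2) ^ d = 3 * L / (n * 2 ^ d) := by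
      rw [div_pow, hεd, hb]
      field_simp
    rw [hq, ← mul_div_assoc, div_le_one (by positivity)] at hScard
    linarith
  -- failure probability bound
  have hreal : (S.card : ℝ) * (1 - c * ε ^ d) ^ n ≤ 1 / n := by
    have h0 : (0:ℝ) ≤ (1 - c * ε ^ d) ^ n := pow_nonneg hnn n
    calc (S.card : ℝ) * (1 - c * ε ^ d) ^ n
        ≤ n * 2 ^ d / (3 * L) * (1 / (n:ℝ) ^ 3) :=
          mul_le_mul hcard' hexp h0 (by positivity)
      _ ≤ 1 / n := by
          rw [div_mul_div_comm, div_le_div_iff₀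
            (mul_pos (by linarith : (0:ℝ) < 3 * L) (by positivity : (0:ℝ) < (n:ℝ) ^ 3)) hnpos]
          have k1 : (2:ℝ) ^ d * (n:ℝ) ^ 2 ≤ (n:ℝ) * (n:ℝ) ^ 2 :=
            mul_le_mul_of_nonneg_right hn2d (by positivity)
          have k2 : (n:ℝ) * (n:ℝ) ^ 2 ≤ 3 * L * ((n:ℝ) * (n:ℝ) ^ 2) :=
            le_mul_of_one_le_left (by positivity) (by linarith)
          nlinarith
  have hfail : (Measure.pi fun _ : Fin n => μ) Gᶜ ≤ ENNReal.ofReal (1 / n) := by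
    rw [hGc]
    refine le_trans (measure_biUnion_finset_le S _) ?_
    refine le_trans (Finset.sum_le_sum hmiss) ?_
    rw [Finset.sum_const, nsmul_eq_mul, ← ENNReal.ofReal_natCast S.card,
      ← ENNReal.ofReal_mul (Nat.cast_nonneg _)]
    exact ENNReal.ofReal_le_ofReal hreal
  -- from the good event to covering
  have hsub : G ⊆ {X : Fin n → EuclideanSpace ℝ (Fin D) |
      M ⊆ ⋃ i, closedBall (X i) (2 * (3 / c) ^ ((1:ℝ) / d) * (L / n) ^ ((1:ℝ) / d))} := by
    intro X hX x hx
    obtain ⟨y, hyS, hxy⟩ := hScov x hx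
    have hXy : ∃ i, X i ∈ closedBall y ε := by
      have h := Set.mem_iInter₂.mp hX y hyS
      rw [Set.mem_iUnion] at h
      exact h
    obtain ⟨i, hi⟩ := hXy
    refine Set.mem_iUnion.mpr ⟨i, ?_⟩
    rw [mem_closedBall] at hi ⊢
    rw [hrad]
    calc dist x (X i) ≤ dist x y + dist y (X i) := dist_triangle _ _ _
      _ ≤ ε + ε := add_le_add hxy (by rwa [dist_comm])
      _ = 2 * ε := by ring
  -- final assembly
  have hcup : (1:ENNReal) ≤ (Measure.pi fun _ : Fin n => μ) G +
      (Measure.pi fun _ : Fin n => μ) Gᶜ := by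
    have h := measure_union_le (μ := Measure.pi fun _ : Fin n => μ) G Gᶜ
    rwa [Set.union_compl_self, measure_univ] at h
  have hG1 : 1 - ENNReal.ofReal (1 / n) ≤ (Measure.pi fun _ : Fin n => μ) G := by
    rw [tsub_le_iff_right]
    exact hcup.trans (add_le_add le_rfl hfail)
  calc ENNReal.ofReal (1 - 1 / (n:ℝ))
      = 1 - ENNReal.ofReal (1 / (n:ℝ)) := by
        rw [ENNReal.ofReal_sub 1 (by positivity), ENNReal.ofReal_one]
    _ ≤ (Measure.pi fun _ : Fin n => μ) G := hG1
    _ ≤ _ := measure_mono hsub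
end
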